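/- arXiv:1402.1908 — 5 statements merged into one kernel-verified Lean document; each statement's English description precedes it below -/
import Mathlib

section
/- The function h(w) = w^δ exp(−κ w^{−γ}) for w > 0, with parameters γ > 0, δ ∈ ℝ, κ > 0, is Γ-varying at 0 with auxiliary function f(w) = w^{1+γ}/(κγ); i.e., for every z ∈ ℝ, lim_{s→0⁺} h(s + z f(s))/h(s) = e^z. -/
open Real Set Filter Topology

/-- `h(w) = w^δ exp(−κ w^{−γ})` is Γ-varying at 0 with auxiliary
function `f(w) = w^{1+γ}/(κγ)`. -/
theorem gamma_varying_example
    (γ δ κ : ℝ) (hγ : 0 < γ) (hκ : 0 < κ)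
    (h f : ℝ → ℝ)
    (hh : ∀ w > (0:ℝ), h w = w ^ δ * Real.exp (-κ * w ^ (-γ)))
    (hf : ∀ w > (0:ℝ), f w = w ^ (1 + γ) / (κ * γ)) :
    ∀ z : ℝ, Tendsto (fun s => h (s + z * f s) / h s)
      (nhdsWithin 0 (Set.Ioi 0)) (nhds (Real.exp z)) := by
  intro z
  have hκγ : (0:ℝ) < κ * γ := mul_pos hκ hγ
  set a : ℝ := z / (κ * γ) with ha
  have hzval : κ * γ * a = z := by rw [ha]; field_simp [hκ.ne', hγ.ne']
  have hpow : Tendsto (fun s : ℝ => s ^ γ) (𝓝[>] (0:ℝ)) (𝓝[>] (0:ℝ)) := by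
    refine tendsto_nhdsWithin_of_tendsto_nhds_of_eventually_within _ ?_ ?_
    · have hc : ContinuousAt (fun s : ℝ => s ^ γ) 0 :=
        Real.continuousAt_rpow_const 0 γ (Or.inr hγ.le)
      have := hc.tendsto.mono_left (nhdsWithin_le_nhds (s := Set.Ioi (0:ℝ)))
      simpa [Real.zero_rpow hγ.ne'] using this
    · filter_upwards [self_mem_nhdsWithin] with s hs
      exact Real.rpow_pos_of_pos hs γ
  have hB : Tendsto (fun s : ℝ => 1 + a * s ^ γ) (𝓝[>] (0:ℝ)) (𝓝 1) := by
    have : Tendsto (fun s : ℝ => 1 + a * s ^ γ) (𝓝[>] (0:ℝ)) (𝓝 (1 + a * 0)) :=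
      tendsto_const_nhds.add (tendsto_const_nhds.mul (hpow.mono_right nhdsWithin_le_nhds))
    simpa using this
  have hBpos : ∀ᶠ s in 𝓝[>] (0:ℝ), 0 < 1 + a * s ^ γ :=
    hB.eventually (eventually_gt_nhds one_pos)
  have hderiv : HasDerivAt (fun t : ℝ => (1 + a * t) ^ (-γ)) (-γ * a) 0 := by
    have hlin : HasDerivAt (fun t : ℝ => 1 + a * t) a 0 := by
      simpa using ((hasDerivAt_id (0:ℝ)).const_mul a).const_add 1
    have h2 := hlin.rpow_const (p := -γ) (Or.inl (by norm_num))
    simpa [mul_comm] using h2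
  have hslope : Tendsto (fun t : ℝ => ((1 + a * t) ^ (-γ) - 1) / t) (𝓝[>] (0:ℝ))
      (𝓝 (-γ * a)) := by
    have h1 := hasDerivAt_iff_tendsto_slope.mp hderiv
    have h2 := h1.mono_left
      (nhdsWithin_mono 0 (fun t ht => (ne_of_gt ht : t ≠ 0)))
    refine Tendsto.congr (fun t => ?_) h2
    simp [slope_def_field]
  have hmain : Tendsto (fun s : ℝ => ((1 + a * s ^ γ) ^ (-γ) - 1) / s ^ γ)
      (𝓝[>] (0:ℝ)) (𝓝 (-γ * a)) := hslope.comp hpow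
  have hexp : Tendsto (fun s : ℝ => Real.exp (-κ * (((1 + a * s ^ γ) ^ (-γ) - 1) / s ^ γ)))
      (𝓝[>] (0:ℝ)) (𝓝 (Real.exp z)) := by
    have h3 := hmain.const_mul (-κ)
    rw [show -κ * (-γ * a) = z by rw [← hzval]; ring] at h3
    exact (Real.continuous_exp.tendsto z).comp h3
  have hfac : Tendsto (fun s : ℝ => (1 + a * s ^ γ) ^ δ) (𝓝[>] (0:ℝ)) (𝓝 1) := by
    have hc : ContinuousAt (fun x : ℝ => x ^ δ) 1 :=
      Real.continuousAt_rpow_const 1 δ (Or.inl one_ne_zero)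
    have := hc.tendsto.comp hB
    simpa [Function.comp_def] using this
  have hlim : Tendsto (fun s : ℝ => (1 + a * s ^ γ) ^ δ *
      Real.exp (-κ * (((1 + a * s ^ γ) ^ (-γ) - 1) / s ^ γ)))
      (𝓝[>] (0:ℝ)) (𝓝 (Real.exp z)) := by
    simpa using hfac.mul hexp
  refine hlim.congr' ?_
  filter_upwards [self_mem_nhdsWithin, hBpos] with s hs hBs
  have hs' : (0:ℝ) < s := hs
  set B : ℝ := 1 + a * s ^ γ with hBdef
  have hsγ : (0:ℝ) < s ^ γ := Real.rpow_pos_of_pos hs' γ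
  have hu : s + z * f s = s * B := by
    rw [hf s hs']
    have h1γ : s ^ (1 + γ) = s * s ^ γ := by
      rw [Real.rpow_add hs', Real.rpow_one]
    rw [h1γ, hBdef, ha]
    field_simp
  have huB : (0:ℝ) < s * B := mul_pos hs' hBs
  rw [hu, hh _ huB, hh s hs']
  rw [Real.mul_rpow hs'.le hBs.le, Real.mul_rpow hs'.le hBs.le]
  have hZ : -κ * ((B ^ (-γ) - 1) / s ^ γ)
      = (-κ * (s ^ (-γ) * B ^ (-γ))) - (-κ * s ^ (-γ)) := by
    rw [Real.rpow_neg hs'.le γ]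
    field_simp
    ring
  rw [hZ, Real.exp_sub]
  have hsδ : (0:ℝ) < s ^ δ := Real.rpow_pos_of_pos hs' δ
  field_simp [Real.exp_ne_zero]
end

section
/- The function h(w) = C w^{−3/2} exp{−(log w)²/(2λ²)} on (0,1), where C = exp(−λ²/8)/(λ√(2π)) and λ > 0, is Γ-varying at 0 with auxiliary function f(w) = −λ² w / log w; i.e., for all z ∈ ℝ, lim_{s→0⁺} h(s + z f(s))/h(s) = e^z. -/
open Real Set Filter Topology

/-- The Smith (Hüsler–Reiss) spectral density tail
`h(w) = C w^{−3/2} exp{−(log w)²/(2λ²)}` with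
`C = exp(−λ²/8)/(λ√(2π))` is Γ-varying at 0 with auxiliary function
`f(w) = −λ² w / log w`. -/
theorem smith_spectral_density_gamma_varying
    (lam : ℝ) (hlam : 0 < lam)
    (h f : ℝ → ℝ)
    (hh : ∀ w ∈ Set.Ioo (0:ℝ) 1,
      h w = Real.exp (-lam ^ 2 / 8) / (lam * Real.sqrt (2 * Real.pi))
              * w ^ (-(3:ℝ)/2) * Real.exp (-(Real.log w) ^ 2 / (2 * lam ^ 2)))
    (hf : ∀ w ∈ Set.Ioo (0:ℝ) 1, f w = -lam ^ 2 * w / Real.log w) :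
    ∀ z : ℝ, Tendsto (fun s => h (s + z * f s) / h s)
      (nhdsWithin 0 (Set.Ioi 0)) (nhds (Real.exp z)) := by
  intro z
  set C : ℝ := Real.exp (-lam ^ 2 / 8) / (lam * Real.sqrt (2 * Real.pi)) with hC
  have hCpos : 0 < C := by
    apply div_pos (Real.exp_pos _)
    exact mul_pos hlam (Real.sqrt_pos.mpr (by positivity))
  set G : ℝ → ℝ := fun ε => (1 + ε*z) ^ (-(3:ℝ)/2) *
      Real.exp (Real.log (1+ε*z)/ε - (Real.log (1+ε*z))^2/(2*lam^2)) with hG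
  -- the auxiliary variable tends to 0⁺
  have hεt : Tendsto (fun s : ℝ => -lam^2 / Real.log s) (𝓝[>] (0:ℝ)) (𝓝[>] (0:ℝ)) := by
    rw [tendsto_nhdsWithin_iff]
    constructor
    · have hkey : ∀ s : ℝ, -lam^2 / Real.log s = lam^2 / (-Real.log s) := by
        intro s; rw [div_neg, neg_div]
      have hneg : Tendsto (fun s : ℝ => -Real.log s) (𝓝[>] (0:ℝ)) atTop :=
        tendsto_neg_atBot_atTop.comp Real.tendsto_log_nhdsGT_zero
      have := Filter.Tendsto.div_atTop (tendsto_const_nhds : Tendsto (fun _ : ℝ => lam^2) _ (𝓝 (lam^2))) hneg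
      exact this.congr (fun s => (hkey s).symm)
    · filter_upwards [Ioo_mem_nhdsGT_of_mem (by norm_num : (0:ℝ) ∈ Set.Ico (0:ℝ) 1)] with s hs
      have hlneg : Real.log s < 0 := Real.log_neg hs.1 hs.2
      have hkey : -lam^2 / Real.log s = lam^2 / (-Real.log s) := by
        rw [div_neg, neg_div]
      rw [Set.mem_Ioi, hkey]
      exact div_pos (by positivity) (by linarith)
  -- G tends to exp z
  have hbase : Tendsto (fun ε : ℝ => 1 + ε*z) (𝓝[>] (0:ℝ)) (𝓝 1) := by
    have hc : Continuous fun ε : ℝ => 1 + ε*z := by continuity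
    simpa using (hc.tendsto 0).mono_left nhdsWithin_le_nhds
  have hL : Tendsto (fun ε : ℝ => Real.log (1+ε*z)) (𝓝[>] (0:ℝ)) (𝓝 0) := by
    have := (Real.continuousAt_log (by norm_num : (1:ℝ) ≠ 0)).tendsto.comp hbase
    simpa [Function.comp_def] using this
  have hslope : Tendsto (fun ε : ℝ => Real.log (1 + ε*z) / ε) (𝓝[>] (0:ℝ)) (𝓝 z) := by
    have hd : HasDerivAt (fun ε : ℝ => Real.log (1 + ε*z)) z 0 := by
      have h1 : HasDerivAt (fun ε : ℝ => 1 + ε*z) z 0 := by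
        simpa using ((hasDerivAt_id (0:ℝ)).mul_const z).const_add 1
      have h2 := (Real.hasDerivAt_log (by norm_num : (1:ℝ) + 0*z ≠ 0)).comp 0 h1
      simpa [div_eq_mul_inv, Function.comp_def] using h2
    have h3 := hasDerivAt_iff_tendsto_slope.mp hd
    have h4 := h3.mono_left (nhdsWithin_mono 0 (fun x hx => ne_of_gt hx : Set.Ioi 0 ⊆ {(0:ℝ)}ᶜ))
    refine h4.congr (fun ε => ?_)
    simp [slope_def_field, Real.log_one]
  have hGt : Tendsto G (𝓝[>] (0:ℝ)) (𝓝 (Real.exp z)) := by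
    have h1 : Tendsto (fun ε : ℝ => (1 + ε*z) ^ (-(3:ℝ)/2)) (𝓝[>] (0:ℝ)) (𝓝 1) := by
      have := ((Real.continuousAt_rpow_const 1 (-(3:ℝ)/2) (Or.inl one_ne_zero)).tendsto).comp hbase
      simpa [Real.one_rpow, Function.comp_def] using this
    have h2 : Tendsto (fun ε : ℝ => (Real.log (1+ε*z))^2/(2*lam^2)) (𝓝[>] (0:ℝ)) (𝓝 0) := by
      have := (hL.pow 2).div_const (2*lam^2)
      simpa using this
    have h3 : Tendsto (fun ε : ℝ => Real.log (1+ε*z)/ε - (Real.log (1+ε*z))^2/(2*lam^2))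
        (𝓝[>] (0:ℝ)) (𝓝 z) := by simpa using hslope.sub h2
    have h4 := (Real.continuous_exp.tendsto z).comp h3
    have := h1.mul h4
    simpa [hG, Function.comp] using this
  -- eventual equality
  have heq : ∀ᶠ s in 𝓝[>] (0:ℝ), h (s + z * f s) / h s = G (-lam^2 / Real.log s) := by
    set δ : ℝ := min (1/2) (Real.exp (-(lam^2*(|z|+1)))) with hδ
    have hδpos : 0 < δ := lt_min (by norm_num) (Real.exp_pos _)
    filter_upwards [Ioo_mem_nhdsGT_of_mem (Set.mem_Ico.mpr ⟨le_refl 0, hδpos⟩)] with s hs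
    obtain ⟨hs0, hsδ⟩ := hs
    have hs12 : s < 1/2 := lt_of_lt_of_le hsδ (min_le_left _ _)
    have hs1 : s < 1 := by linarith
    have hlogs : Real.log s < -(lam^2*(|z|+1)) := by
      have := Real.log_lt_log hs0 (lt_of_lt_of_le hsδ (min_le_right _ _))
      rwa [Real.log_exp] at this
    have hM : 0 < lam^2*(|z|+1) := by positivity
    have hlneg : Real.log s < 0 := by linarith
    set E : ℝ := -lam^2 / Real.log s with hE
    have hEeq : E = lam^2 / (-Real.log s) := by rw [hE, div_neg, neg_div]
    have hEpos : 0 < E := by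
      rw [hEeq]; exact div_pos (by positivity) (by linarith)
    have hE1 : E * (|z|+1) < 1 := by
      have heq2 : E * (|z|+1) = lam^2*(|z|+1) / (-Real.log s) := by
        rw [hEeq]; ring
      rw [heq2, div_lt_one (by linarith)]
      linarith
    have hEabs : E * |z| < 1 := by nlinarith [hEpos]
    have hEz : 0 < 1 + E * z := by
      nlinarith [mul_le_mul_of_nonneg_left (neg_abs_le z) hEpos.le]
    have hEz2 : 1 + E * z < 2 := by
      nlinarith [mul_le_mul_of_nonneg_left (le_abs_self z) hEpos.le]
    have ht0 : 0 < s * (1 + E * z) := mul_pos hs0 hEz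
    have ht1 : s * (1 + E * z) < 1 := by nlinarith
    have hfs : s + z * f s = s * (1 + E * z) := by
      rw [hf s ⟨hs0, hs1⟩, hE]
      field_simp
    rw [hfs, hh _ ⟨ht0, ht1⟩, hh s ⟨hs0, hs1⟩,
      Real.mul_rpow hs0.le hEz.le, Real.log_mul hs0.ne' hEz.ne']
    have hexp : Real.exp (-(Real.log s + Real.log (1+E*z))^2/(2*lam^2))
        = Real.exp (Real.log (1+E*z)/E - (Real.log (1+E*z))^2/(2*lam^2))
          * Real.exp (-(Real.log s)^2/(2*lam^2)) := by
      rw [← Real.exp_add]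
      congr 1
      rw [hE]
      field_simp
      ring
    have hne : C * s ^ (-(3:ℝ)/2) * Real.exp (-(Real.log s)^2/(2*lam^2)) ≠ 0 :=
      (mul_pos (mul_pos hCpos (Real.rpow_pos_of_pos hs0 _)) (Real.exp_pos _)).ne'
    rw [hexp]
    simp only [hG]
    rw [div_eq_iff hne]
    ring
  exact (hGt.comp hεt).congr' (Filter.EventuallyEq.symm heq)
end

section
/- Let V(x,y) = (1/2)(1/x + 1/y)[1 + {1 − 2(1+ρ)xy/(x+y)²}^{1/2}] be the Schlather exponent measure with ρ ∈ (−1,1). Then the spectral measure mass at 0, given by H({0}) = −y² lim_{x→0⁺} ∂V(x,y)/∂y, equals (1−ρ)/2. -/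
open Real Set Filter Topology

lemma s_pos {ρ x y : ℝ} (hρ1 : -1 < ρ) (hρ2 : ρ < 1) (hx : 0 < x) (hy : 0 < y) :
    0 < 1 - 2 * (1 + ρ) * x * y / (x + y) ^ 2 := by
  have hxy : (0:ℝ) < (x + y) ^ 2 := by positivity
  rw [sub_pos, div_lt_one hxy]
  nlinarith [sq_nonneg (x - y), mul_pos hx hy]

lemma schlather_hasDerivAt {ρ x y : ℝ} (hρ1 : -1 < ρ) (hρ2 : ρ < 1)
    (hx : 0 < x) (hy : 0 < y) :
    HasDerivAt (fun t => (1/2) * (1/x + 1/t)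
        * (1 + Real.sqrt (1 - 2 * (1 + ρ) * x * t / (x + t) ^ 2)))
      (-(1 + Real.sqrt (1 - 2 * (1 + ρ) * x * y / (x + y) ^ 2)) / (2 * y ^ 2)
        + (1 + ρ) * (y - x)
            / (2 * y * Real.sqrt (1 - 2 * (1 + ρ) * x * y / (x + y) ^ 2) * (x + y) ^ 2)) y := by
  have hxy : (0:ℝ) < x + y := by linarith
  have hs : 0 < 1 - 2 * (1 + ρ) * x * y / (x + y) ^ 2 := s_pos hρ1 hρ2 hx hy
  have hsq : 0 < Real.sqrt (1 - 2 * (1 + ρ) * x * y / (x + y) ^ 2) := Real.sqrt_pos.mpr hs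
  have h1 : HasDerivAt (fun t : ℝ => 1/x + 1/t) (-(1/y^2)) y := by
    simpa [one_div] using (hasDerivAt_inv hy.ne').const_add (1/x)
  have h2 : HasDerivAt (fun t : ℝ => 2 * (1 + ρ) * x * t) (2 * (1 + ρ) * x) y := by
    simpa using (hasDerivAt_id y).const_mul (2 * (1 + ρ) * x)
  have h3 : HasDerivAt (fun t : ℝ => (x + t) ^ 2) (2 * (x + y)) y := by
    have := ((hasDerivAt_id y).const_add x).fun_pow 2
    simpa using this
  have hdiv := h2.div h3 (by positivity)
  have hs' : HasDerivAt (fun t : ℝ => 1 - 2 * (1 + ρ) * x * t / (x + t) ^ 2)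
      (-((2 * (1 + ρ) * x * (x + y) ^ 2 - 2 * (1 + ρ) * x * y * (2 * (x + y)))
          / ((x + y) ^ 2) ^ 2)) y := hdiv.const_sub 1
  have hsqrt := hs'.sqrt hs.ne'
  have hB := hsqrt.const_add 1
  have final := (h1.fun_mul hB).const_mul (1/2 : ℝ)
  have heq : ∀ q : ℝ, 0 < q →
      -(1 + q) / (2 * y ^ 2) + (1 + ρ) * (y - x) / (2 * y * q * (x + y) ^ 2)
        = 1/2 * (-(1/y^2) * (1 + q) + (1/x + 1/y)
            * (-((2 * (1 + ρ) * x * (x + y) ^ 2 - 2 * (1 + ρ) * x * y * (2 * (x + y)))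
                / ((x + y) ^ 2) ^ 2) / (2 * q))) := by
    intro q hq
    have hxyne : x + y ≠ 0 := hxy.ne'
    field_simp
    ring
  rw [heq _ hsq]
  simpa only [mul_assoc] using final

/-- For the Schlather exponent measure
`V(x,y) = (1/2)(1/x + 1/y)[1 + √(1 − 2(1+ρ)xy/(x+y)²)]` with `ρ ∈ (−1,1)`,
the spectral-measure mass at 0, `H({0}) = −y² lim_{x→0⁺} ∂V(x,y)/∂y`,
equals `(1−ρ)/2`. -/
theorem schlather_mass_at_zero
    (ρ : ℝ) (hρ : ρ ∈ Set.Ioo (-1:ℝ) 1)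
    (V : ℝ → ℝ → ℝ)
    (hV : ∀ x > (0:ℝ), ∀ y > (0:ℝ),
      V x y = (1/2) * (1/x + 1/y)
        * (1 + Real.sqrt (1 - 2 * (1 + ρ) * x * y / (x + y) ^ 2))) :
    ∀ y > (0:ℝ),
      Tendsto (fun x => -(y ^ 2) * deriv (fun t => V x t) y)
        (nhdsWithin 0 (Set.Ioi 0)) (nhds ((1 - ρ) / 2)) := by
  obtain ⟨hρ1, hρ2⟩ := hρ
  intro y hy
  set D : ℝ → ℝ := fun x =>
    -(1 + Real.sqrt (1 - 2 * (1 + ρ) * x * y / (x + y) ^ 2)) / (2 * y ^ 2)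
      + (1 + ρ) * (y - x)
          / (2 * y * Real.sqrt (1 - 2 * (1 + ρ) * x * y / (x + y) ^ 2) * (x + y) ^ 2)
    with hD
  have hderiv : ∀ x ∈ Set.Ioi (0:ℝ), deriv (fun t => V x t) y = D x := by
    intro x hx
    have hx : 0 < x := hx
    have heq : (fun t => V x t) =ᶠ[nhds y]
        (fun t => (1/2) * (1/x + 1/t)
          * (1 + Real.sqrt (1 - 2 * (1 + ρ) * x * t / (x + t) ^ 2))) := by
      filter_upwards [Ioi_mem_nhds hy] with t ht using hV x hx t ht
    rw [heq.deriv_eq, (schlather_hasDerivAt hρ1 hρ2 hx hy).deriv]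
  have hev : (fun x => -(y ^ 2) * D x) =ᶠ[nhdsWithin (0:ℝ) (Set.Ioi 0)]
      (fun x => -(y ^ 2) * deriv (fun t => V x t) y) := by
    filter_upwards [self_mem_nhdsWithin] with x hx
    rw [hderiv x hx]
  refine Tendsto.congr' hev ?_
  apply tendsto_nhdsWithin_of_tendsto_nhds
  have hc : ContinuousAt (fun x => -(y ^ 2) * D x) 0 := by
    have h1 : ContinuousAt (fun x : ℝ => 1 - 2 * (1 + ρ) * x * y / (x + y) ^ 2) 0 := by
      have : ContinuousAt (fun x : ℝ => 2 * (1 + ρ) * x * y / (x + y) ^ 2) 0 := by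
        apply ContinuousAt.div (by fun_prop) (by fun_prop)
        simp [hy.ne']
      exact continuousAt_const.sub this
    have hsq : ContinuousAt (fun x : ℝ =>
        Real.sqrt (1 - 2 * (1 + ρ) * x * y / (x + y) ^ 2)) 0 :=
      Real.continuous_sqrt.continuousAt.comp h1
    apply ContinuousAt.mul continuousAt_const
    apply ContinuousAt.add
    · exact ((continuousAt_const.add hsq).neg).div continuousAt_const (by positivity)
    · apply ContinuousAt.div (by fun_prop)
      · exact ((continuousAt_const.mul hsq).mul (by fun_prop))
      · simp [hy.ne']
  have hval : -(y ^ 2) * D 0 = (1 - ρ) / 2 := by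
    simp only [hD]
    norm_num
    field_simp
    ring
  rw [← hval]
  exact hc.tendsto
end

section
/- Consider W(x,z) := −(x/(κγ)²)(y/x)^{δ+2(1+γ)} exp{−κ(y/x)^{−γ}} with y = a(x)+b(x)z, a(x) = x κ^{1/γ}(log x)^{−1/γ}[1 + γ^{−2}{δ+2(1+γ)}(log log x)/(log x)], b(x) = x(log x)^{−1−1/γ}. Then for each fixed z ∈ ℝ, lim_{x→∞} W(x,z) = −{κ^{(δ+2)/γ}/γ²} exp(γ κ^{−1/γ} z), so 1 − exp{W(x,z)} converges to G(z) = 1 − exp[−{κ^{(δ+2)/γ}/γ²} exp(γκ^{−1/γ}z)], a nondegenerate distribution function in z. -/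
open Real Set Filter Topology

lemma deriv_one_add_rpow (q : ℝ) {s : ℝ} (hs : 1 + s > 0) :
    HasDerivAt (fun t : ℝ => (1 + t) ^ q) (q * (1 + s) ^ (q - 1)) s := by
  have h1 : HasDerivAt (fun t : ℝ => 1 + t) 1 s := (hasDerivAt_id s).const_add 1
  have h2 := (Real.hasDerivAt_rpow_const (p := q) (Or.inl (ne_of_gt hs))).comp s h1
  simpa [Function.comp_def] using h2

lemma rpow_abs_bound {t q : ℝ} (h12 : (1/2 : ℝ) ≤ 1 + t) (hq : 0 ≤ q) :
    (1 + t) ^ (-q) ≤ 2 ^ q := by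
  have h1t : (0:ℝ) < 1 + t := by linarith
  have : (1 + t) ^ (-q) = ((1+t)⁻¹) ^ q := by
    rw [Real.rpow_neg h1t.le, ← Real.inv_rpow h1t.le]
  rw [this]
  exact Real.rpow_le_rpow (by positivity) (by rw [inv_le_comm₀ h1t (by norm_num)]; linarith) hq

lemma taylor_key (γ : ℝ) (hγ : 0 < γ) :
    ∀ ε : ℝ, |ε| ≤ 1/2 →
      |(1 + ε) ^ (-γ) - 1 + γ * ε| ≤ (γ * ((γ+1) * 2 ^ (γ+2))) * ε ^ 2 := by
  intro ε hε
  set M : ℝ := (γ+1) * 2 ^ (γ+2) with hM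
  have hMpos : 0 < M := by positivity
  set S : Set ℝ := Icc (-(1/2) : ℝ) (1/2) with hSdef
  have hS : Convex ℝ S := convex_Icc _ _
  have hmem : ∀ t ∈ S, (0:ℝ) < 1 + t ∧ (1/2 : ℝ) ≤ 1 + t := by
    intro t ht; rcases ht with ⟨h1, h2⟩; constructor <;> linarith
  -- Step 1: |(1+s)^(-(γ+1)) - 1| ≤ M * |s| for s ∈ S
  have step1 : ∀ s ∈ S, |(1 + s) ^ (-(γ+1)) - 1| ≤ M * |s| := by
    intro s hs
    have hd : ∀ t ∈ S, HasDerivWithinAt (fun t : ℝ => (1 + t) ^ (-(γ+1)))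
          ((-(γ+1)) * (1 + t) ^ (-(γ+1) - 1)) S t := fun t ht =>
      (deriv_one_add_rpow _ (hmem t ht).1).hasDerivWithinAt
    have hbound : ∀ t ∈ S, ‖(-(γ+1)) * (1 + t) ^ (-(γ+1) - 1)‖ ≤ M := by
      intro t ht
      have h2 : (1 + t) ^ (-(γ+1) - 1) ≤ 2 ^ (γ+2) := by
        have : -(γ+1) - 1 = -(γ+2) := by ring
        rw [this]; exact rpow_abs_bound (hmem t ht).2 (by linarith)
      have hpos : (0:ℝ) ≤ (1 + t) ^ (-(γ+1) - 1) := Real.rpow_nonneg (hmem t ht).1.le _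
      rw [norm_mul, norm_neg, Real.norm_eq_abs, Real.norm_eq_abs,
        abs_of_pos (by linarith : (0:ℝ) < γ + 1), abs_of_nonneg hpos]
      calc (γ+1) * (1 + t) ^ (-(γ+1) - 1) ≤ (γ+1) * 2 ^ (γ+2) :=
            mul_le_mul_of_nonneg_left h2 (by linarith)
        _ = M := hM.symm
    have h0 : (0:ℝ) ∈ S := by constructor <;> norm_num
    have := hS.norm_image_sub_le_of_norm_hasDerivWithin_le hd hbound h0 hs
    simpa using this
  -- Step 2
  have h0 : (0:ℝ) ∈ S := by constructor <;> norm_num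
  have hεS : ε ∈ S := by rw [hSdef, Set.mem_Icc]; exact abs_le.mp hε
  set S' : Set ℝ := Icc (-|ε|) |ε| with hS'def
  have hS'sub : S' ⊆ S := by
    rw [hS'def, hSdef]
    exact Icc_subset_Icc (by linarith) hε
  have hS' : Convex ℝ S' := convex_Icc _ _
  have hd2 : ∀ t ∈ S', HasDerivWithinAt (fun t : ℝ => (1 + t) ^ (-γ) - 1 + γ * t)
      (γ * (1 - (1 + t) ^ (-(γ+1)))) S' t := by
    intro t ht
    have h1 := deriv_one_add_rpow (-γ) (hmem t (hS'sub ht)).1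
    have h2 : HasDerivAt (fun t : ℝ => (1 + t) ^ (-γ) - 1 + γ * t)
        ((-γ) * (1 + t) ^ (-γ - 1) + γ) t := by
      simpa [Pi.add_def] using ((h1.sub_const 1).add ((hasDerivAt_id t).const_mul γ))
    have : (-γ) * (1 + t) ^ (-γ - 1) + γ = γ * (1 - (1 + t) ^ (-(γ+1))) := by
      have : -γ - 1 = -(γ+1) := by ring
      rw [this]; ring
    rw [← this]; exact h2.hasDerivWithinAt
  have hbound2 : ∀ t ∈ S', ‖γ * (1 - (1 + t) ^ (-(γ+1)))‖ ≤ γ * (M * |ε|) := by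
    intro t ht
    have h1 : |(1 + t) ^ (-(γ+1)) - 1| ≤ M * |t| := step1 t (hS'sub ht)
    have h2 : |t| ≤ |ε| := by
      rcases ht with ⟨ha, hb⟩; rw [abs_le]; constructor <;> linarith
    rw [norm_mul, Real.norm_eq_abs, Real.norm_eq_abs, abs_of_pos hγ]
    apply mul_le_mul_of_nonneg_left _ hγ.le
    rw [abs_sub_comm]
    calc |(1 + t) ^ (-(γ+1)) - 1| ≤ M * |t| := h1
      _ ≤ M * |ε| := mul_le_mul_of_nonneg_left h2 hMpos.le
  have h0' : (0:ℝ) ∈ S' := by rw [hS'def, Set.mem_Icc]; constructor <;> [linarith [abs_nonneg ε]; exact abs_nonneg ε]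
  have hε' : ε ∈ S' := by rw [hS'def, Set.mem_Icc]; exact ⟨neg_abs_le ε, le_abs_self ε⟩
  have := hS'.norm_image_sub_le_of_norm_hasDerivWithin_le hd2 hbound2 h0' hε'
  simp only [Real.norm_eq_abs] at this
  have heq : ((1 + ε) ^ (-γ) - 1 + γ * ε) - ((1 + (0:ℝ)) ^ (-γ) - 1 + γ * 0) =
      (1 + ε) ^ (-γ) - 1 + γ * ε := by
    simp [Real.one_rpow]
  rw [heq, sub_zero] at this
  calc |(1 + ε) ^ (-γ) - 1 + γ * ε| ≤ γ * (M * |ε|) * |ε| := this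
    _ = (γ * M) * ε ^ 2 := by rw [← sq_abs ε]; ring

noncomputable def epsAux (γ δ κ z : ℝ) : ℝ → ℝ := fun x =>
  ((γ⁻¹^2 * (δ + 2*(1+γ))) * Real.log (Real.log x) + κ ^ (-(1/γ)) * z) / Real.log x

lemma epsAux_tendsto (γ δ κ z : ℝ) :
    Tendsto (epsAux γ δ κ z) atTop (nhds 0) := by
  have h1 : Tendsto (fun t : ℝ => Real.log t / t) atTop (nhds 0) :=
    Real.isLittleO_log_id_atTop.tendsto_div_nhds_zero
  have h2 : Tendsto (fun x : ℝ => Real.log (Real.log x) / Real.log x) atTop (nhds 0) :=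
    h1.comp Real.tendsto_log_atTop
  have h3 : Tendsto (fun x : ℝ => (Real.log x)⁻¹) atTop (nhds 0) :=
    Real.tendsto_log_atTop.inv_tendsto_atTop
  have h4 := ((h2.const_mul (γ⁻¹^2 * (δ + 2*(1+γ)))).add (h3.const_mul (κ ^ (-(1/γ)) * z)))
  simp only [mul_zero, add_zero] at h4
  exact h4.congr fun x => by unfold epsAux; ring

lemma logsq_tendsto (c d : ℝ) :
    Tendsto (fun x : ℝ => Real.log x * (((c * Real.log (Real.log x) + d) / Real.log x)) ^ 2)
      atTop (nhds 0) := by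
  have h1 : Tendsto (fun t : ℝ => Real.log t / t ^ (1/2 : ℝ)) atTop (nhds 0) :=
    (isLittleO_log_rpow_atTop (by norm_num : (0:ℝ) < 1/2)).tendsto_div_nhds_zero
  have h3 : Tendsto (fun t : ℝ => (t ^ (1/2:ℝ))⁻¹) atTop (nhds 0) := by
    have := tendsto_rpow_neg_atTop (by norm_num : (0:ℝ) < 1/2)
    refine this.congr' ?_
    filter_upwards [eventually_gt_atTop (0:ℝ)] with t ht
    rw [Real.rpow_neg ht.le]
  have hF : Tendsto (fun t : ℝ => (c * Real.log t + d) / t ^ (1/2:ℝ)) atTop (nhds 0) := by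
    have h4 := (h1.const_mul c).add (h3.const_mul d)
    simp only [mul_zero, add_zero] at h4
    exact h4.congr fun t => by ring
  have hFF := hF.mul hF
  rw [mul_zero] at hFF
  have hG : Tendsto (fun t : ℝ => (c * Real.log t + d) ^ 2 / t) atTop (nhds 0) := by
    refine hFF.congr' ?_
    filter_upwards [eventually_gt_atTop (0:ℝ)] with t ht
    have : t ^ (1/2:ℝ) * t ^ (1/2:ℝ) = t := by
      rw [← Real.rpow_add ht]; norm_num
    rw [div_mul_div_comm, this]; ring
  have hGL := hG.comp Real.tendsto_log_atTop
  refine hGL.congr' ?_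
  filter_upwards [Real.tendsto_log_atTop.eventually_gt_atTop 0] with x hx
  have hne : Real.log x ≠ 0 := ne_of_gt hx
  rw [Function.comp_apply]
  field_simp

noncomputable def TAux (γ δ κ z : ℝ) : ℝ → ℝ := fun x =>
  -(Real.log x * ((1 + epsAux γ δ κ z x) ^ (-γ) - 1 + γ * epsAux γ δ κ z x))
  + ((δ + 2*(1+γ)) * Real.log (1 + epsAux γ δ κ z x)
     + (γ * (κ ^ (-(1/γ)) * z) + ((δ+2)/γ) * Real.log κ - 2 * Real.log γ))

lemma TAux_tendsto (γ δ κ z : ℝ) (hγ : 0 < γ) :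
    Tendsto (TAux γ δ κ z) atTop
      (nhds (γ * (κ ^ (-(1/γ)) * z) + ((δ+2)/γ) * Real.log κ - 2 * Real.log γ)) := by
  set ε := epsAux γ δ κ z with hεdef
  have hε0 : Tendsto ε atTop (nhds 0) := epsAux_tendsto γ δ κ z
  have hLε2 : Tendsto (fun x => Real.log x * (ε x)^2) atTop (nhds 0) := by
    have := logsq_tendsto (γ⁻¹^2 * (δ + 2*(1+γ))) (κ ^ (-(1/γ)) * z)
    exact this.congr fun x => rfl
  have hsmall : ∀ᶠ x in atTop, |ε x| ≤ 1/2 := by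
    have hmem : Set.Icc (-(1/2):ℝ) (1/2) ∈ nhds (0:ℝ) :=
      Icc_mem_nhds (by norm_num) (by norm_num)
    filter_upwards [hε0.eventually_mem hmem] with x hx
    rw [abs_le]; exact hx
  -- first piece tends to 0
  have hT1 : Tendsto (fun x => -(Real.log x * ((1 + ε x) ^ (-γ) - 1 + γ * ε x)))
      atTop (nhds 0) := by
    have hb : Tendsto (fun x => (γ * ((γ+1) * 2 ^ (γ+2))) * (Real.log x * (ε x)^2))
        atTop (nhds 0) := by simpa using hLε2.const_mul (γ * ((γ+1) * 2 ^ (γ+2)))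
    refine squeeze_zero_norm' ?_ hb
    filter_upwards [hsmall, Real.tendsto_log_atTop.eventually_ge_atTop 0] with x hx hL
    have := taylor_key γ hγ (ε x) hx
    rw [norm_neg, Real.norm_eq_abs, abs_mul, abs_of_nonneg hL]
    calc Real.log x * |(1 + ε x) ^ (-γ) - 1 + γ * ε x|
        ≤ Real.log x * ((γ * ((γ+1) * 2 ^ (γ+2))) * (ε x) ^ 2) :=
          mul_le_mul_of_nonneg_left this hL
      _ = (γ * ((γ+1) * 2 ^ (γ+2))) * (Real.log x * (ε x)^2) := by ring
  have hT2 : Tendsto (fun x => Real.log (1 + ε x)) atTop (nhds 0) := by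
    have hcont : ContinuousAt Real.log 1 := Real.continuousAt_log one_ne_zero
    have h1 : Tendsto (fun x => 1 + ε x) atTop (nhds 1) := by
      simpa using (tendsto_const_nhds.add hε0)
    simpa [Function.comp_def] using hcont.tendsto.comp h1
  have := hT1.add ((hT2.const_mul (δ + 2*(1+γ))).add
    (tendsto_const_nhds (x := γ * (κ ^ (-(1/γ)) * z) + ((δ+2)/γ) * Real.log κ - 2 * Real.log γ)))
  unfold TAux
  rw [← hεdef]
  simpa using this
lemma W_eq (γ δ κ z : ℝ) (hγ : 0 < γ) (hκ : 0 < κ) {x : ℝ} (hx : 1 < x)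
    (hL : 1 < Real.log x) (hsm : |epsAux γ δ κ z x| ≤ 1/2) :
    -(x / (κ * γ) ^ 2) * ((x * κ ^ (1/γ) * (Real.log x) ^ (-(1/γ))
        * (1 + γ⁻¹ ^ 2 * (δ + 2 * (1 + γ)) * Real.log (Real.log x) / Real.log x)
        + x * (Real.log x) ^ (-1 - 1/γ) * z) / x) ^ (δ + 2 * (1 + γ))
      * Real.exp (-κ * ((x * κ ^ (1/γ) * (Real.log x) ^ (-(1/γ))
        * (1 + γ⁻¹ ^ 2 * (δ + 2 * (1 + γ)) * Real.log (Real.log x) / Real.log x)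
        + x * (Real.log x) ^ (-1 - 1/γ) * z) / x) ^ (-γ))
    = -Real.exp (TAux γ δ κ z x) := by
  have hγ' : γ ≠ 0 := hγ.ne'
  have hx0 : (0:ℝ) < x := by linarith
  set L := Real.log x with hLdef
  have hL0 : (0:ℝ) < L := by linarith
  set ℓ := Real.log L with hℓdef
  set ε := epsAux γ δ κ z x with hεdef
  have hεval : ε = ((γ⁻¹^2 * (δ + 2*(1+γ))) * ℓ + κ ^ (-(1/γ)) * z) / L := rfl
  have h1ε : (0:ℝ) < 1 + ε := by
    have := abs_le.mp hsm; linarith [this.1]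
  have hκκ : κ ^ (1/γ) * κ ^ (-(1/γ)) = 1 := by
    rw [← Real.rpow_add hκ]; simp
  have hLL : L ^ (-1 - 1/γ) = L ^ (-(1/γ)) * L⁻¹ := by
    rw [show (-1 - 1/γ) = (-(1/γ)) + (-1) by ring, Real.rpow_add hL0, Real.rpow_neg_one]
  have hu : (x * κ ^ (1/γ) * L ^ (-(1/γ))
        * (1 + γ⁻¹ ^ 2 * (δ + 2 * (1 + γ)) * ℓ / L)
        + x * L ^ (-1 - 1/γ) * z) / x
      = κ ^ (1/γ) * L ^ (-(1/γ)) * (1 + ε) := by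
    rw [hLL, hεval, div_eq_iff hx0.ne']
    linear_combination (-(x * L⁻¹ * L ^ (-(1/γ)) * z)) * hκκ
  rw [hu]
  have hK0 : (0:ℝ) < κ ^ (1/γ) := Real.rpow_pos_of_pos hκ _
  have hLp0 : (0:ℝ) < L ^ (-(1/γ)) := Real.rpow_pos_of_pos hL0 _
  have hu0 : (0:ℝ) < κ ^ (1/γ) * L ^ (-(1/γ)) * (1 + ε) := by positivity
  have hupow : (κ ^ (1/γ) * L ^ (-(1/γ)) * (1 + ε)) ^ (δ + 2*(1+γ))
      = Real.exp (((1/γ) * Real.log κ + (-(1/γ)) * ℓ + Real.log (1 + ε)) * (δ + 2*(1+γ))) := by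
    rw [Real.rpow_def_of_pos hu0]
    congr 2
    rw [Real.log_mul (by positivity) h1ε.ne', Real.log_mul hK0.ne' hLp0.ne',
      Real.log_rpow hκ, Real.log_rpow hL0]
  have hA : (κ ^ (1/γ)) ^ (-γ) = κ⁻¹ := by
    rw [← Real.rpow_mul hκ.le, show (1/γ) * (-γ) = -1 by field_simp, Real.rpow_neg_one]
  have hB : (L ^ (-(1/γ))) ^ (-γ) = L := by
    rw [← Real.rpow_mul hL0.le, show (-(1/γ)) * (-γ) = 1 by field_simp, Real.rpow_one]
  have huneg : -κ * (κ ^ (1/γ) * L ^ (-(1/γ)) * (1 + ε)) ^ (-γ)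
      = -(L * (1 + ε) ^ (-γ)) := by
    rw [Real.mul_rpow (by positivity) h1ε.le, Real.mul_rpow hK0.le hLp0.le, hA, hB]
    field_simp
  rw [huneg, hupow]
  have hxexp : x / (κ * γ) ^ 2 = Real.exp (L - 2 * (Real.log κ + Real.log γ)) := by
    have h1 : Real.exp L = x := Real.exp_log hx0
    have h2 : Real.exp (2 * (Real.log κ + Real.log γ)) = (κ * γ) ^ 2 := by
      rw [← Real.log_mul hκ.ne' hγ',
        show (2:ℝ) * Real.log (κ*γ) = Real.log ((κ*γ)^2) by rw [Real.log_pow]; push_cast; ring]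
      exact Real.exp_log (by positivity)
    rw [Real.exp_sub, h1, h2]
  rw [hxexp, neg_mul, neg_mul, ← Real.exp_add, ← Real.exp_add]
  congr 2
  -- final algebraic identity
  unfold TAux
  set D := κ ^ (-(1/γ)) with hD
  set Q := (1+ε) ^ (-γ) with hQ
  set G1 := Real.log (1+ε) with hG1
  have hLε1 : γ * (L * ε) = (δ + 2*(1+γ))/γ * ℓ + γ * (D * z) := by
    rw [hεval]
    field_simp
  have hcoef : (δ + 2*(1+γ))/γ = 2 + (δ+2)/γ := by
    field_simp
    ring
  linear_combination hLε1 + Real.log κ * hcoef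

theorem gamma_model_conditional_limit
    (γ δ κ : ℝ) (hγ : 0 < γ) (hκ : 0 < κ)
    (a b : ℝ → ℝ)
    (ha : ∀ x > (1:ℝ), a x = x * κ ^ (1/γ) * (Real.log x) ^ (-(1/γ))
      * (1 + γ⁻¹ ^ 2 * (δ + 2 * (1 + γ)) * Real.log (Real.log x) / Real.log x))
    (hb : ∀ x > (1:ℝ), b x = x * (Real.log x) ^ (-1 - 1/γ))
    (W : ℝ → ℝ → ℝ)
    (hW : ∀ x > (1:ℝ), ∀ z : ℝ,
      W x z = -(x / (κ * γ) ^ 2) * ((a x + b x * z) / x) ^ (δ + 2 * (1 + γ))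
        * Real.exp (-κ * ((a x + b x * z) / x) ^ (-γ)))
    (G : ℝ → ℝ)
    (hG : ∀ z : ℝ, G z = 1 - Real.exp (-(κ ^ ((δ + 2)/γ) / γ ^ 2)
      * Real.exp (γ * κ ^ (-(1/γ)) * z))) :
    (∀ z : ℝ, Tendsto (fun x => W x z) atTop
        (nhds (-(κ ^ ((δ + 2)/γ) / γ ^ 2) * Real.exp (γ * κ ^ (-(1/γ)) * z)))) ∧
    (∀ z : ℝ, Tendsto (fun x => 1 - Real.exp (W x z)) atTop (nhds (G z))) ∧
    StrictMono G ∧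
    Tendsto G atTop (nhds 1) ∧ Tendsto G atBot (nhds 0) := by
  have hγ' : γ ≠ 0 := hγ.ne'
  have hval : ∀ z : ℝ, -(κ ^ ((δ + 2)/γ) / γ ^ 2) * Real.exp (γ * κ ^ (-(1/γ)) * z)
      = -Real.exp (γ * (κ ^ (-(1/γ)) * z) + ((δ+2)/γ) * Real.log κ - 2 * Real.log γ) := by
    intro z
    have h1 : κ ^ ((δ + 2)/γ) = Real.exp ((δ+2)/γ * Real.log κ) := by
      rw [Real.rpow_def_of_pos hκ, mul_comm]
    have h2 : (γ:ℝ) ^ 2 = Real.exp (2 * Real.log γ) := by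
      rw [show (2:ℝ) * Real.log γ = Real.log (γ^2) by rw [Real.log_pow]; push_cast; ring]
      rw [Real.exp_log (by positivity)]
    rw [h1, h2, div_eq_mul_inv, ← Real.exp_neg, ← Real.exp_add, neg_mul, ← Real.exp_add,
      neg_inj, Real.exp_eq_exp]
    ring
  have part1 : ∀ z : ℝ, Tendsto (fun x => W x z) atTop
      (nhds (-(κ ^ ((δ + 2)/γ) / γ ^ 2) * Real.exp (γ * κ ^ (-(1/γ)) * z))) := by
    intro z
    rw [hval z]
    have hT := TAux_tendsto γ δ κ z hγ
    have hlim : Tendsto (fun x => -Real.exp (TAux γ δ κ z x)) atTop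
        (nhds (-Real.exp (γ * (κ ^ (-(1/γ)) * z) + ((δ+2)/γ) * Real.log κ - 2 * Real.log γ))) :=
      ((Real.continuous_exp.tendsto _).comp hT).neg
    refine hlim.congr' ?_
    have hsmall : ∀ᶠ x in atTop, |epsAux γ δ κ z x| ≤ 1/2 := by
      have hmem : Set.Icc (-(1/2):ℝ) (1/2) ∈ nhds (0:ℝ) :=
        Icc_mem_nhds (by norm_num) (by norm_num)
      filter_upwards [(epsAux_tendsto γ δ κ z).eventually_mem hmem] with x hx
      rw [abs_le]; exact hx
    filter_upwards [eventually_gt_atTop (1:ℝ),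
      Real.tendsto_log_atTop.eventually_gt_atTop 1, hsmall] with x hx hL hsm
    rw [hW x hx z, ha x hx, hb x hx]
    exact (W_eq γ δ κ z hγ hκ hx hL hsm).symm
  refine ⟨part1, ?_, ?_, ?_, ?_⟩
  · intro z
    have h2 := ((Real.continuous_exp.tendsto _).comp (part1 z)).const_sub 1
    rw [hG z]
    exact h2
  · intro z1 z2 h
    rw [hG z1, hG z2]
    have hB : (0:ℝ) < κ ^ ((δ + 2)/γ) / γ ^ 2 := by positivity
    apply sub_lt_sub_left
    apply Real.exp_lt_exp.mpr
    rw [neg_mul, neg_mul, neg_lt_neg_iff]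
    apply mul_lt_mul_of_pos_left _ hB
    apply Real.exp_lt_exp.mpr
    have hm : (0:ℝ) < γ * κ ^ (-(1/γ)) := by positivity
    exact mul_lt_mul_of_pos_left h hm
  · have hB : (0:ℝ) < κ ^ ((δ + 2)/γ) / γ ^ 2 := by positivity
    have hm : (0:ℝ) < γ * κ ^ (-(1/γ)) := by positivity
    have h1 : Tendsto (fun z : ℝ => γ * κ ^ (-(1/γ)) * z) atTop atTop := by
      exact (tendsto_const_mul_atTop_of_pos hm).mpr tendsto_id
    have h2 := Real.tendsto_exp_atTop.comp h1
    have h3 : Tendsto (fun z : ℝ => -(κ ^ ((δ + 2)/γ) / γ ^ 2)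
        * Real.exp (γ * κ ^ (-(1/γ)) * z)) atTop atBot := by
      exact (tendsto_const_mul_atBot_of_neg (by linarith)).mpr h2
    have h4 := Real.tendsto_exp_atBot.comp h3
    have h5 := h4.const_sub 1
    rw [show (1:ℝ) - 0 = 1 by norm_num] at h5
    exact h5.congr fun z => (hG z).symm
  · have hm : (0:ℝ) < γ * κ ^ (-(1/γ)) := by positivity
    have h1 : Tendsto (fun z : ℝ => γ * κ ^ (-(1/γ)) * z) atBot atBot := by
      exact (tendsto_const_mul_atBot_of_pos hm).mpr tendsto_id
    have h2 := Real.tendsto_exp_atBot.comp h1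
    have h3 : Tendsto (fun z : ℝ => -(κ ^ ((δ + 2)/γ) / γ ^ 2)
        * Real.exp (γ * κ ^ (-(1/γ)) * z)) atBot (nhds 0) := by
      have := h2.const_mul (-(κ ^ ((δ + 2)/γ) / γ ^ 2))
      simpa using this
    have h4 := (Real.continuous_exp.tendsto _).comp h3
    rw [Real.exp_zero] at h4
    have h5 := h4.const_sub 1
    rw [sub_self] at h5
    exact h5.congr fun z => (hG z).symm
end

section
/- Let λ > 0 and define W(x,z) := −c (x y)^{1/2} φ{(1/λ)log(y/x)} / {(1/λ)log(y/x)}², where c = λ exp(−λ²/8), φ is the standard normal density, y = a(x)+b(x)z with a(x) = x exp{−λ(2log x)^{1/2} + λ log log x/(2 log x)^{1/2} + λ²/2} and b(x) = a(x)/(log x)^{1/2}. Then for each fixed z ∈ ℝ, lim_{x→∞} W(x,z) = −(λ/√(8π)) exp(√2 z/λ); consequently 1 − exp{W(x,z)} → G(z) = 1 − exp{−(λ/√(8π)) exp(√2 z/λ)}, a reverted Gumbel distribution function. -/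
open Real Set Filter Topology

noncomputable def Laux (z t : ℝ) : ℝ := Real.log (1 + z / Real.sqrt t)
noncomputable def raux (lam z t : ℝ) : ℝ :=
  Real.log t / Real.sqrt (2*t) + lam/2 + (1/lam) * Laux z t
noncomputable def uaux (lam z t : ℝ) : ℝ := -Real.sqrt (2*t) + raux lam z t
noncomputable def Qaux (lam z t : ℝ) : ℝ :=
  lam/2 * (Real.log t / Real.sqrt (2*t)) + lam^2/4 + (1/2) * Laux z t
    + (Real.sqrt (2*t)/lam) * Laux z t - (raux lam z t)^2/2
noncomputable def Faux (lam z t : ℝ) : ℝ :=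
  -(lam * Real.exp (-lam^2/8))/(2*Real.sqrt (2*Real.pi)) * (2*t/(uaux lam z t)^2)
    * Real.exp (Qaux lam z t)

lemma sqrt_tendsto_atTop : Tendsto Real.sqrt atTop atTop := by
  apply tendsto_atTop_atTop.2
  intro b
  exact ⟨(max b 0)^2, fun a ha => by
    calc b ≤ max b 0 := le_max_left _ _
    _ = Real.sqrt ((max b 0)^2) := by rw [Real.sqrt_sq (le_max_right _ _)]
    _ ≤ Real.sqrt a := Real.sqrt_le_sqrt ha⟩

lemma log_div_sqrt_tendsto : Tendsto (fun t : ℝ => Real.log t / Real.sqrt t) atTop (𝓝 0) := by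
  have h := (isLittleO_log_rpow_atTop (by norm_num : (0:ℝ) < 1/2)).tendsto_div_nhds_zero
  refine h.congr' ?_
  filter_upwards [eventually_ge_atTop (0:ℝ)] with t ht
  rw [Real.sqrt_eq_rpow]

lemma two_t_atTop : Tendsto (fun t : ℝ => 2*t) atTop atTop :=
  tendsto_id.const_mul_atTop two_pos

lemma sqrt2t_atTop : Tendsto (fun t : ℝ => Real.sqrt (2*t)) atTop atTop :=
  sqrt_tendsto_atTop.comp two_t_atTop

lemma hL_lim (z : ℝ) : Tendsto (fun t => Real.sqrt t * Laux z t) atTop (𝓝 z) :=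
  (Real.tendsto_mul_log_one_add_div_atTop z).comp sqrt_tendsto_atTop

lemma hL0 (z : ℝ) : Tendsto (fun t => Laux z t) atTop (𝓝 0) := by
  have h := (hL_lim z).mul (tendsto_inv_atTop_zero.comp sqrt_tendsto_atTop)
  rw [mul_zero] at h
  refine h.congr' ?_
  filter_upwards [eventually_gt_atTop (0:ℝ)] with t ht
  have : Real.sqrt t ≠ 0 := (Real.sqrt_pos.2 ht).ne'
  simp only [Function.comp_apply]
  field_simp

lemma hlogs (z : ℝ) :
    Tendsto (fun t : ℝ => Real.log t / Real.sqrt (2*t)) atTop (𝓝 0) := by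
  have h := log_div_sqrt_tendsto.mul_const (Real.sqrt 2)⁻¹
  rw [zero_mul] at h
  refine h.congr' ?_
  filter_upwards [eventually_ge_atTop (0:ℝ)] with t ht
  rw [Real.sqrt_mul (by norm_num : (0:ℝ) ≤ 2) t]
  ring

lemma hr_lim (lam z : ℝ) : Tendsto (raux lam z) atTop (𝓝 (lam/2)) := by
  have hc : Tendsto (fun _ : ℝ => lam/2) atTop (𝓝 (lam/2)) := tendsto_const_nhds
  have h := ((hlogs z).add hc).add ((hL0 z).const_mul (1/lam))
  rw [show lam/2 = 0 + lam/2 + 1/lam * 0 by ring]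
  exact h.congr fun t => by rw [raux]

lemma hfrac_lim (lam z : ℝ) :
    Tendsto (fun t => 2*t/(uaux lam z t)^2) atTop (𝓝 1) := by
  have hq : Tendsto (fun t => -1 + raux lam z t * (Real.sqrt (2*t))⁻¹) atTop (𝓝 (-1)) := by
    have := (hr_lim lam z).mul (tendsto_inv_atTop_zero.comp sqrt2t_atTop)
    rw [mul_zero] at this
    simpa using tendsto_const_nhds.add this
  have hq2 : Tendsto (fun t => (-1 + raux lam z t * (Real.sqrt (2*t))⁻¹)^2) atTop (𝓝 1) := by
    have := hq.mul hq
    norm_num at this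
    simpa [pow_two] using this
  have hu2 : Tendsto (fun t => (uaux lam z t)^2 / (2*t)) atTop (𝓝 1) := by
    refine hq2.congr' ?_
    filter_upwards [eventually_gt_atTop (0:ℝ)] with t ht
    have hs : (0:ℝ) < Real.sqrt (2*t) := Real.sqrt_pos.2 (by linarith)
    have hss : Real.sqrt (2*t) ^ 2 = 2*t := Real.sq_sqrt (by linarith)
    have hu : uaux lam z t = Real.sqrt (2*t) * (-1 + raux lam z t * (Real.sqrt (2*t))⁻¹) := by
      unfold uaux
      field_simp
    rw [hu, mul_pow, hss]
    field_simp
  have := hu2.inv₀ one_ne_zero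
  norm_num at this
  exact this

lemma hsL_lim (lam z : ℝ) (hlam : 0 < lam) :
    Tendsto (fun t => (Real.sqrt (2*t)/lam) * Laux z t) atTop
      (𝓝 (Real.sqrt 2 * z / lam)) := by
  have h := ((hL_lim z).const_mul (Real.sqrt 2)).mul_const lam⁻¹
  refine h.congr' ?_ |>.mono_right ?_
  · filter_upwards [eventually_ge_atTop (0:ℝ)] with t ht
    rw [Real.sqrt_mul (by norm_num : (0:ℝ) ≤ 2) t]
    ring
  · rw [show Real.sqrt 2 * z * lam⁻¹ = Real.sqrt 2 * z / lam by ring]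

lemma hQ_lim (lam z : ℝ) (hlam : 0 < lam) :
    Tendsto (fun t => Qaux lam z t) atTop
      (𝓝 (lam^2/4 + Real.sqrt 2 * z / lam - lam^2/8)) := by
  have h1 := (hlogs z).const_mul (lam/2)
  have h2 := (hL0 z).const_mul (1/2:ℝ)
  have h3 := hsL_lim lam z hlam
  have h4 : Tendsto (fun t => (raux lam z t)^2/2) atTop (𝓝 (lam^2/8)) := by
    have := ((hr_lim lam z).mul (hr_lim lam z)).div_const 2
    refine this.congr' (by filter_upwards with t; ring) |>.mono_right ?_
    rw [show lam/2 * (lam/2) / 2 = lam^2/8 by ring]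
  have hc : Tendsto (fun _ : ℝ => lam^2/4) atTop (𝓝 (lam^2/4)) := tendsto_const_nhds
  have := ((((h1.add hc).add h2).add h3).sub h4)
  refine this.congr' (by filter_upwards with t; rw [Qaux]) |>.mono_right ?_
  norm_num

lemma sqrt8pi : Real.sqrt (8*Real.pi) = 2 * Real.sqrt (2*Real.pi) := by
  rw [show (8:ℝ)*Real.pi = 4*(2*Real.pi) by ring,
    Real.sqrt_mul (by norm_num : (0:ℝ) ≤ 4),
    show (4:ℝ) = 2^2 by norm_num, Real.sqrt_sq (by norm_num : (0:ℝ) ≤ 2)]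

lemma hF_lim (lam z : ℝ) (hlam : 0 < lam) :
    Tendsto (Faux lam z) atTop
      (𝓝 (-(lam / Real.sqrt (8*Real.pi)) * Real.exp (Real.sqrt 2 * z / lam))) := by
  have hc : Tendsto (fun _ : ℝ => -(lam * Real.exp (-lam^2/8))/(2*Real.sqrt (2*Real.pi)))
      atTop (𝓝 (-(lam * Real.exp (-lam^2/8))/(2*Real.sqrt (2*Real.pi)))) := tendsto_const_nhds
  have h := (hc.mul (hfrac_lim lam z)).mul
    ((Real.continuous_exp.tendsto _).comp (hQ_lim lam z hlam))
  have heq : -(lam * Real.exp (-lam^2/8))/(2*Real.sqrt (2*Real.pi)) * 1 *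
      Real.exp (lam^2/4 + Real.sqrt 2 * z / lam - lam^2/8)
      = -(lam / Real.sqrt (8*Real.pi)) * Real.exp (Real.sqrt 2 * z / lam) := by
    rw [sqrt8pi, show lam^2/4 + Real.sqrt 2 * z / lam - lam^2/8
        = lam^2/8 + Real.sqrt 2 * z / lam by ring, Real.exp_add]
    have h1 : Real.exp (-lam^2/8) * Real.exp (lam^2/8) = 1 := by
      rw [← Real.exp_add, show -lam^2/8 + lam^2/8 = 0 by ring, Real.exp_zero]
    calc -(lam * Real.exp (-lam^2/8))/(2*Real.sqrt (2*Real.pi)) * 1 *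
          (Real.exp (lam^2/8) * Real.exp (Real.sqrt 2 * z / lam))
        = -(lam * (Real.exp (-lam^2/8) * Real.exp (lam^2/8)))/(2*Real.sqrt (2*Real.pi))
          * Real.exp (Real.sqrt 2 * z / lam) := by ring
      _ = -(lam / (2*Real.sqrt (2*Real.pi))) * Real.exp (Real.sqrt 2 * z / lam) := by
          rw [h1]; ring
  rw [← heq]
  exact h.congr fun t => rfl

theorem test : True := trivial

/-- For the inverted Smith model, with
`W(x,z) = −c √(xy) φ{(1/λ)log(y/x)}/{(1/λ)log(y/x)}²`, `c = λ e^{−λ²/8}`,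
`y = a(x)+b(x)z`, we have `W(x,z) → −(λ/√(8π)) exp(√2 z/λ)` as `x → ∞`, hence
`1 − exp{W(x,z)} → G(z) = 1 − exp{−(λ/√(8π)) exp(√2 z/λ)}`,
a reverted Gumbel distribution function. -/
theorem inverted_smith_conditional_limit
    (lam : ℝ) (hlam : 0 < lam)
    (φ : ℝ → ℝ)
    (hφ : ∀ u : ℝ, φ u = (Real.sqrt (2 * Real.pi))⁻¹ * Real.exp (-u ^ 2 / 2))
    (a b : ℝ → ℝ)
    (ha : ∀ x > (1:ℝ), a x = x * Real.exp (-lam * Real.sqrt (2 * Real.log x)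
      + lam * Real.log (Real.log x) / Real.sqrt (2 * Real.log x) + lam ^ 2 / 2))
    (hb : ∀ x > (1:ℝ), b x = a x / Real.sqrt (Real.log x))
    (W : ℝ → ℝ → ℝ)
    (hW : ∀ x > (1:ℝ), ∀ z : ℝ,
      W x z = -(lam * Real.exp (-lam ^ 2 / 8)) * Real.sqrt (x * (a x + b x * z))
        * φ ((1/lam) * Real.log ((a x + b x * z) / x))
        / ((1/lam) * Real.log ((a x + b x * z) / x)) ^ 2)
    (G : ℝ → ℝ)
    (hG : ∀ z : ℝ, G z = 1 - Real.exp (-(lam / Real.sqrt (8 * Real.pi))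
      * Real.exp (Real.sqrt 2 * z / lam))) :
    (∀ z : ℝ, Tendsto (fun x => W x z) atTop
        (nhds (-(lam / Real.sqrt (8 * Real.pi)) * Real.exp (Real.sqrt 2 * z / lam)))) ∧
    (∀ z : ℝ, Tendsto (fun x => 1 - Real.exp (W x z)) atTop (nhds (G z))) := by
  have key : ∀ z : ℝ, Tendsto (fun x => W x z) atTop
      (nhds (-(lam / Real.sqrt (8 * Real.pi)) * Real.exp (Real.sqrt 2 * z / lam))) := by
    intro z
    have hF := (hF_lim lam z hlam).comp Real.tendsto_log_atTop
    refine hF.congr' ?_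
    have hev1 : ∀ᶠ t : ℝ in atTop, uaux lam z t < 0 := by
      have h1 : ∀ᶠ t : ℝ in atTop, raux lam z t < lam :=
        (hr_lim lam z).eventually_lt_const (by linarith)
      filter_upwards [h1, sqrt2t_atTop.eventually_gt_atTop lam] with t h1 h2
      unfold uaux; linarith
    have hevt : ∀ᶠ t : ℝ in atTop, 1 < t ∧ (|z|+1)^2 < t ∧ uaux lam z t < 0 :=
      (eventually_gt_atTop 1).and ((eventually_gt_atTop _).and hev1)
    filter_upwards [Real.tendsto_log_atTop.eventually hevt, eventually_gt_atTop (1:ℝ)]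
      with x hx hx1
    set t := Real.log x with htdef
    obtain ⟨ht1, htz, huneg⟩ := hx
    have hx0 : (0:ℝ) < x := lt_trans one_pos hx1
    have ht0 : (0:ℝ) < t := lt_trans one_pos ht1
    have hst : 0 < Real.sqrt t := Real.sqrt_pos.2 ht0
    have hs : 0 < Real.sqrt (2*t) := Real.sqrt_pos.2 (by linarith)
    have hss : Real.sqrt (2*t)^2 = 2*t := Real.sq_sqrt (by linarith)
    have hzabs : |z| + 1 < Real.sqrt t := by
      rw [show Real.sqrt t = Real.sqrt t from rfl]
      have := (Real.lt_sqrt (by positivity : (0:ℝ) ≤ |z|+1)).2 htz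
      exact this
    have hzt : 0 < 1 + z / Real.sqrt t := by
      have habs : |z / Real.sqrt t| < 1 := by
        rw [abs_div, abs_of_pos hst, div_lt_one hst]
        linarith [abs_nonneg z]
      linarith [(abs_lt.1 habs).1]
    have hy : a x + b x * z
        = x * Real.exp (-lam * Real.sqrt (2*t) + lam * Real.log t / Real.sqrt (2*t)
            + lam^2/2) * (1 + z / Real.sqrt t) := by
      rw [hb x hx1, ha x hx1, ← htdef]
      ring
    have hy0 : 0 < a x + b x * z := by
      rw [hy]
      exact mul_pos (mul_pos hx0 (Real.exp_pos _)) hzt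
    have hlog1 : Real.log ((a x + b x * z)/x) = lam * uaux lam z t := by
      rw [hy]
      have hred : x * Real.exp (-lam * Real.sqrt (2*t) + lam * Real.log t / Real.sqrt (2*t)
            + lam^2/2) * (1 + z / Real.sqrt t) / x
          = Real.exp (-lam * Real.sqrt (2*t) + lam * Real.log t / Real.sqrt (2*t)
            + lam^2/2) * (1 + z / Real.sqrt t) := by
        field_simp
      rw [hred, Real.log_mul (Real.exp_ne_zero _) hzt.ne', Real.log_exp]
      unfold uaux raux Laux
      field_simp
      ring
    have hu' : (1/lam) * Real.log ((a x + b x * z)/x) = uaux lam z t := by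
      rw [hlog1]; field_simp
    have hxy0 : 0 < x * (a x + b x * z) := mul_pos hx0 hy0
    have hlogy : Real.log (a x + b x * z) = t + lam * uaux lam z t := by
      have := Real.log_div hy0.ne' hx0.ne'
      rw [this] at hlog1
      linarith
    have hsqrt : Real.sqrt (x * (a x + b x * z))
        = Real.exp (t + lam * uaux lam z t / 2) := by
      rw [← Real.exp_log (Real.sqrt_pos.2 hxy0), Real.log_sqrt hxy0.le,
        Real.log_mul hx0.ne' hy0.ne', hlogy]
      congr 1
      ring
    have hune : uaux lam z t ≠ 0 := ne_of_lt huneg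
    have hkey : t + lam * uaux lam z t/2 + (-(uaux lam z t)^2/2)
        = Real.log t + Qaux lam z t := by
      unfold Qaux uaux raux
      set A := Real.log t with hA
      set M := Laux z t with hM
      set s := Real.sqrt (2*t) with hsdef
      have ht2 : t = s^2/2 := by rw [hss]; ring
      rw [ht2]
      field_simp
      ring
    show Faux lam z t = W x z
    rw [hW x hx1 z, hφ, hu', hsqrt]
    unfold Faux
    have hcomb : Real.exp (t + lam * uaux lam z t / 2) * Real.exp (-(uaux lam z t)^2/2)
        = t * Real.exp (Qaux lam z t) := by
      rw [← Real.exp_add, show t + lam * uaux lam z t / 2 + (-(uaux lam z t)^2/2)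
        = t + lam * uaux lam z t/2 + (-(uaux lam z t)^2/2) by ring, hkey,
        Real.exp_add, Real.exp_log ht0]
    have hsp : (0:ℝ) < Real.sqrt (2*Real.pi) := Real.sqrt_pos.2 (by positivity)
    rw [show -(lam * Real.exp (-lam ^ 2 / 8)) * Real.exp (t + lam * uaux lam z t / 2)
        * ((Real.sqrt (2 * Real.pi))⁻¹ * Real.exp (-(uaux lam z t) ^ 2 / 2))
        / (uaux lam z t) ^ 2
      = -(lam * Real.exp (-lam ^ 2 / 8)) * (Real.exp (t + lam * uaux lam z t / 2)
        * Real.exp (-(uaux lam z t)^2/2)) * (Real.sqrt (2 * Real.pi))⁻¹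
        / (uaux lam z t) ^ 2 by ring, hcomb]
    field_simp
  refine ⟨key, fun z => ?_⟩
  rw [hG z]
  exact ((Real.continuous_exp.tendsto _).comp (key z)).const_sub 1
end
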